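/- Let V be an indecomposable module over a ring such that V/Soc(V) is simple. Then every proper submodule of V is contained in Soc(V). Moreover, if M ⊊ V is a proper submodule such that V/M is semisimple, then M = Soc(V). -/

import Mathlib

/-- The socle of a module: the sum of all its simple submodules. -/
noncomputable def moduleSocle (R : Type*) (M : Type*) [Ring R] [AddCommGroup M]
    [Module R M] : Submodule R M :=
  sSup {m : Submodule R M | IsSimpleModule R ↥m}

lemma moduleSocle_isSemisimple (R : Type*) (M : Type*) [Ring R] [AddCommGroup M]
    [Module R M] : IsSemisimpleModule R ↥(moduleSocle R M) := by
  have : moduleSocle R M = ⨆ m ∈ {m : Submodule R M | IsSimpleModule R ↥m}, m := by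
    rw [moduleSocle, sSup_eq_iSup]
  rw [this]
  exact isSemisimpleModule_biSup_of_isSemisimpleModule_submodule
    (fun m hm => haveI : IsSimpleModule R ↥m := hm; inferInstance)

/-- If `V` is indecomposable (nonzero and not an internal direct sum of two nonzero
submodules) and `V / Soc(V)` is simple, then every proper submodule of `V` is contained in
`Soc(V)`; moreover every proper submodule `M` with `V / M` semisimple equals `Soc(V)`. -/
theorem proper_submodule_le_socle {R : Type*} [Ring R] {V : Type*} [AddCommGroup V]
    [Module R V] (hne : (⊥ : Submodule R V) ≠ ⊤)
    (hind : ∀ A B : Submodule R V, A ⊓ B = ⊥ → A ⊔ B = ⊤ → A = ⊥ ∨ B = ⊥)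
    (hsoc : IsSimpleModule R (V ⧸ moduleSocle R V)) :
    (∀ W : Submodule R V, W ≠ ⊤ → W ≤ moduleSocle R V) ∧
    (∀ M : Submodule R V, M ≠ ⊤ → IsSemisimpleModule R (V ⧸ M) → M = moduleSocle R V) := by
  set S := moduleSocle R V with hS
  have hSne : S ≠ ⊤ := by
    intro h
    haveI : Subsingleton (V ⧸ S) := Submodule.Quotient.subsingleton_iff.mpr h
    exact (bot_ne_top : (⊥ : Submodule R (V ⧸ S)) ≠ ⊤) (Subsingleton.elim _ _)
  have claim1 : ∀ W : Submodule R V, W ≠ ⊤ → W ≤ S := by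
    intro W hW
    by_contra hWS
    -- W ⊔ S = ⊤ since image of W in V ⧸ S is nonzero, hence ⊤
    have hWtop : W ⊔ S = ⊤ := by
      have h1 : Submodule.map S.mkQ W ≠ ⊥ := by
        intro h
        apply hWS
        have := Submodule.map_le_iff_le_comap.mp h.le
        rwa [Submodule.comap_bot, Submodule.ker_mkQ] at this
      have h2 : Submodule.map S.mkQ W = ⊤ :=
        (hsoc.1.2 _).resolve_left h1
      have := congrArg (Submodule.comap S.mkQ) h2
      rwa [Submodule.comap_map_eq, Submodule.ker_mkQ, Submodule.comap_top] at this
    -- find a complement C of W ⊓ S inside S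
    have hss : IsSemisimpleModule R ↥S := moduleSocle_isSemisimple R V
    obtain ⟨c, hc⟩ := exists_isCompl ((W ⊓ S).comap S.subtype)
    set C := c.map S.subtype with hC
    have hCS : C ≤ S := by
      rw [hC]; exact (Submodule.map_subtype_le _ _)
    have hmapinf : Submodule.map S.subtype ((W ⊓ S).comap S.subtype) = W ⊓ S := by
      rw [Submodule.map_comap_subtype, inf_comm, inf_assoc, inf_idem]
    have hCinf : C ⊓ W = ⊥ := by
      have : C ⊓ (W ⊓ S) = ⊥ := by
        rw [hC, ← hmapinf, ← Submodule.map_inf _ (Submodule.injective_subtype S),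
          (disjoint_iff.mp hc.disjoint.symm), Submodule.map_bot]
      calc C ⊓ W = C ⊓ (W ⊓ S) := by
            rw [← inf_assoc, inf_comm C W, inf_assoc, inf_of_le_left hCS]
        _ = ⊥ := this
    have hCS' : C ⊔ (W ⊓ S) = S := by
      rw [hC, ← hmapinf, ← Submodule.map_sup, (codisjoint_iff.mp hc.codisjoint.symm),
        Submodule.map_top, Submodule.range_subtype]
    have hCsup : C ⊔ W = ⊤ := by
      have : C ⊔ W = C ⊔ (W ⊓ S) ⊔ W := by
        rw [sup_assoc, sup_comm (W ⊓ S) W, sup_inf_self]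
      rw [this, hCS', sup_comm, hWtop]
    rcases hind C W hCinf hCsup with h | h
    · -- C = ⊥ forces S ≤ W, so W = ⊤
      have : S ≤ W := by
        rw [h, bot_sup_eq] at hCS'
        exact hCS' ▸ inf_le_left
      exact hW (top_unique (hWtop ▸ sup_le le_rfl this))
    · exact hWS (h ▸ bot_le)
  refine ⟨claim1, ?_⟩
  intro M hM hMs
  have hMS : M ≤ S := claim1 M hM
  -- use complemented lattice in V ⧸ M
  obtain ⟨Q, hQ⟩ := exists_isCompl (Submodule.map M.mkQ S)
  set N := Submodule.comap M.mkQ Q with hN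
  have hNtop : N = ⊤ := by
    by_contra hNt
    have hNS : N ≤ S := claim1 N hNt
    have hQle : Q ≤ Submodule.map M.mkQ S := by
      have : Q = Submodule.map M.mkQ N := by
        rw [hN, Submodule.map_comap_eq, Submodule.range_mkQ, top_inf_eq]
      rw [this]
      exact Submodule.map_mono hNS
    have hQbot : Q = ⊥ := by
      have := disjoint_iff.mp hQ.disjoint
      rw [inf_eq_right.mpr hQle] at this
      exact this
    have : Submodule.map M.mkQ S = ⊤ := by
      have := codisjoint_iff.mp hQ.codisjoint
      rwa [hQbot, sup_bot_eq] at this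
    have hST : S ⊔ M = ⊤ := by
      have := congrArg (Submodule.comap M.mkQ) this
      rwa [Submodule.comap_map_eq, Submodule.ker_mkQ, Submodule.comap_top] at this
    exact hSne (by rwa [sup_eq_left.mpr hMS] at hST)
  have hQtop : Q = ⊤ := by
    have : Submodule.map M.mkQ N = Q ⊓ LinearMap.range M.mkQ := by
      rw [hN, Submodule.map_comap_eq, inf_comm]
    rw [hNtop, Submodule.map_top, Submodule.range_mkQ, inf_comm, top_inf_eq] at this
    · exact this.symm
  have hSM : Submodule.map M.mkQ S = ⊥ := by
    have := disjoint_iff.mp hQ.disjoint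
    rwa [hQtop, inf_top_eq] at this
  have : S ≤ M := by
    have := Submodule.map_le_iff_le_comap.mp hSM.le
    rwa [Submodule.comap_bot, Submodule.ker_mkQ] at this
  exact le_antisymm hMS this
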